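/- Let (R, m) be a Noetherian local ring of characteristic p > 0 with an m-primary ideal I. Then e_HK(I) ≤ length(R/I) · e_HK(m). -/

import Mathlib

open Filter IsLocalRing

noncomputable section

variable {R : Type*} [CommRing R]

/-- The `q`-th Frobenius power `I^{[q]}` of an ideal `I`. -/
def fpow (I : Ideal R) (q : ℕ) : Ideal R := Ideal.span ((fun x => x ^ q) '' (I : Set R))

/-- The length of `R ⧸ I` as an `R`-module, as a natural number. -/
def qlen (I : Ideal R) : ℕ := (WithBot.unbotD 0 (Order.krullDim (Submodule R (R ⧸ I)))).toNat

/-- The length of `R ⧸ I` as an `R`-module, in `ℕ∞`. -/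
def lenE (I : Ideal R) : ℕ∞ := WithBot.unbotD 0 (Order.krullDim (Submodule R (R ⧸ I)))

/-- The tight closure `I*` of an ideal `I` in a ring of characteristic `p`. -/
def tightClosure (p : ℕ) (I : Ideal R) : Ideal R :=
  Ideal.span {x | ∃ c : R, (∀ P ∈ minimalPrimes R, c ∉ P) ∧
    ∃ e₀ : ℕ, ∀ e ≥ e₀, c * x ^ p ^ e ∈ fpow I (p ^ e)}

/-- `c` is a test element: `c` avoids all minimal primes and for every ideal `I`,
`x ∈ I*` iff `c x^q ∈ I^{[q]}` for all `q = p^e`. -/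
def IsTestElement (p : ℕ) (c : R) : Prop :=
  (∀ P ∈ minimalPrimes R, c ∉ P) ∧
    ∀ (I : Ideal R) (x : R), x ∈ tightClosure p I ↔ ∀ e : ℕ, c * x ^ p ^ e ∈ fpow I (p ^ e)

end


noncomputable section AuxLen
open Submodule Order

open Submodule Order
noncomputable def elen (R M : Type*) [CommRing R] [AddCommGroup M] [Module R M] : ℕ∞ :=
  ⨆ p : LTSeries (Submodule R M), (p.length : ℕ∞)
variable {R : Type*} [CommRing R]

lemma qlen_eq_toNat_elen (I : Ideal R) : qlen I = (elen R (R ⧸ I)).toNat := by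
  unfold qlen
  rw [Order.krullDim_eq_iSup_length, WithBot.unbotD_coe]
  rfl

variable {M N : Type*} [AddCommGroup M] [Module R M] [AddCommGroup N] [Module R N]

lemma length_le_elen (p : LTSeries (Submodule R M)) : (p.length : ℕ∞) ≤ elen R M :=
  le_iSup (fun p : LTSeries (Submodule R M) => (p.length : ℕ∞)) p

lemma elen_le_of_strictMono (f : Submodule R M → Submodule R N) (hf : StrictMono f) :
    elen R M ≤ elen R N := by
  refine iSup_le fun p => ?_
  have : ((p.map f hf).length : ℕ∞) ≤ elen R N := length_le_elen _
  simpa using this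

lemma elen_congr (e : M ≃ₗ[R] N) : elen R M = elen R N :=
  le_antisymm
    (elen_le_of_strictMono _ (Submodule.orderIsoMapComap e).strictMono)
    (elen_le_of_strictMono _ (Submodule.orderIsoMapComap e).symm.strictMono)

lemma elen_le_of_surjective (f : M →ₗ[R] N) (hf : Function.Surjective f) :
    elen R N ≤ elen R M :=
  elen_le_of_strictMono (Submodule.comap f) (Submodule.comap_strictMono_of_surjective hf)

lemma elen_le_of_injective (f : M →ₗ[R] N) (hf : Function.Injective f) :
    elen R M ≤ elen R N :=
  elen_le_of_strictMono (Submodule.map f) (Submodule.map_strictMono_of_injective hf)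

lemma height_le_elen (a : Submodule R M) : Order.height a ≤ elen R M :=
  Order.height_le fun p _ => length_le_elen p

lemma ltSeries_prod_length_le {γ δ : Type*} [Preorder γ] [Preorder δ] :
    ∀ (n : ℕ) (p : LTSeries (γ × δ)), p.length = n →
      (n : ℕ∞) ≤ Order.height p.last.1 + Order.height p.last.2 := by
  intro n
  induction n with
  | zero => intro p _; exact zero_le
  | succ n ih =>
    intro p h
    have h1 : p.eraseLast.length = n := by
      simp [RelSeries.eraseLast, h]
    have ihe := ih p.eraseLast h1
    have hlt : p.eraseLast.last < p.last := by
      have : (⟨p.length - 1, by omega⟩ : Fin (p.length + 1)) < ⟨p.length, by omega⟩ := by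
        rw [Fin.mk_lt_mk]; omega
      have := p.strictMono this
      simpa [RelSeries.eraseLast, RelSeries.last, Fin.last] using this
    rcases Prod.lt_iff.mp hlt with ⟨hl, hr⟩ | ⟨hl, hr⟩
    · have hstep : Order.height p.eraseLast.last.1 + 1 ≤ Order.height p.last.1 := by
        rw [Order.height_eq_iSup_lt_height p.last.1]
        exact le_iSup₂ (f := fun y (_ : y < p.last.1) => Order.height y + 1) _ hl
      calc ((n + 1 : ℕ) : ℕ∞) = (n : ℕ∞) + 1 := by push_cast; ring
        _ ≤ (Order.height p.eraseLast.last.1 + Order.height p.eraseLast.last.2) + 1 := by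
            exact add_le_add ihe le_rfl
        _ = (Order.height p.eraseLast.last.1 + 1) + Order.height p.eraseLast.last.2 := by ring
        _ ≤ Order.height p.last.1 + Order.height p.last.2 :=
            add_le_add hstep (Order.height_mono hr)
    · have hstep : Order.height p.eraseLast.last.2 + 1 ≤ Order.height p.last.2 := by
        rw [Order.height_eq_iSup_lt_height p.last.2]
        exact le_iSup₂ (f := fun y (_ : y < p.last.2) => Order.height y + 1) _ hr
      calc ((n + 1 : ℕ) : ℕ∞) = (n : ℕ∞) + 1 := by push_cast; ring
        _ ≤ (Order.height p.eraseLast.last.1 + Order.height p.eraseLast.last.2) + 1 :=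
            add_le_add ihe le_rfl
        _ = Order.height p.eraseLast.last.1 + (Order.height p.eraseLast.last.2 + 1) := by ring
        _ ≤ Order.height p.last.1 + Order.height p.last.2 :=
            add_le_add (Order.height_mono hl) hstep

lemma elen_le_subadd (N : Submodule R M) : elen R M ≤ elen R N + elen R (M ⧸ N) := by
  refine iSup_le fun p => ?_
  set f : Submodule R M → Submodule R ↥N × Submodule R (M ⧸ N) :=
    fun x => (x.comap N.subtype, x.map N.mkQ) with hfdef
  have hf : StrictMono f := by
    intro x y hxy
    rw [lt_iff_le_and_ne]
    constructor
    · exact ⟨Submodule.comap_mono hxy.le, Submodule.map_mono hxy.le⟩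
    · intro heq
      have h1 : x.comap N.subtype = y.comap N.subtype := congrArg Prod.fst heq
      have h2 : x.map N.mkQ = y.map N.mkQ := congrArg Prod.snd heq
      have hinf : N ⊓ x = N ⊓ y := by
        rw [← Submodule.map_comap_subtype, ← Submodule.map_comap_subtype, h1]
      have hsup : N ⊔ x = N ⊔ y := by
        rw [← Submodule.comap_map_mkQ, ← Submodule.comap_map_mkQ, h2]
      have : x = y := by
        refine eq_of_le_of_inf_le_of_sup_le (z := N) hxy.le (le_of_eq ?_) (le_of_eq ?_)
        · rw [inf_comm y N, ← hinf, inf_comm N x]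
        · rw [sup_comm y N, ← hsup, sup_comm N x]
      exact hxy.ne this
  have := ltSeries_prod_length_le (p.map f hf).length (p.map f hf) rfl
  simp only [RelSeries.map_length] at this
  refine this.trans (add_le_add (height_le_elen _) (height_le_elen _))

lemma elen_eq_zero_of_subsingleton [Subsingleton M] : elen R M = 0 := by
  refine le_antisymm (iSup_le fun p => ?_) zero_le
  rcases Nat.eq_zero_or_pos p.length with h | h
  · simp [h]
  · exfalso
    have := p.step ⟨0, h⟩
    exact (show p.toFun (Fin.castSucc ⟨0, h⟩) < p.toFun (Fin.succ ⟨0, h⟩) from this).ne (Subsingleton.elim _ _)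

lemma one_le_elen_of_nontrivial [Nontrivial M] : 1 ≤ elen R M := by
  have hbt : (⊥ : Submodule R M) < ⊤ := by
    obtain ⟨x, hx⟩ := exists_ne (0 : M)
    refine lt_of_le_of_ne le_top fun h => hx ?_
    have : x ∈ (⊥ : Submodule R M) := h ▸ Submodule.mem_top
    simpa using this
  have := length_le_elen ((RelSeries.singleton _ (⊤ : Submodule R M)).cons ⊥ hbt)
  have h1 : ((RelSeries.singleton {x : Submodule R M × Submodule R M | x.1 < x.2} ⊤).cons ⊥ hbt).length = 1 := rfl
  rw [h1] at this
  simpa using this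

/-- chains in a quotient module by a nonzero submodule lift and extend by ⊥. -/
lemma length_add_one_le_elen (N : Submodule R M) (hN : N ≠ ⊥)
    (p : LTSeries (Submodule R (M ⧸ N))) : (p.length : ℕ∞) + 1 ≤ elen R M := by
  set hq := p.map (Submodule.comap N.mkQ) (Submodule.comap_strictMono_of_surjective
    (Submodule.mkQ_surjective N)) with hqdef
  have hhead : (⊥ : Submodule R M) < hq.head := by
    refine lt_of_lt_of_le hN.bot_lt ?_
    have : hq.head = Submodule.comap N.mkQ p.head := rfl
    rw [this]
    exact Submodule.le_comap_mkQ N _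
  have := length_le_elen (hq.cons ⊥ hhead)
  have hlen : (hq.cons ⊥ hhead).length = p.length + 1 := by
    simp [hqdef]
  rw [hlen] at this
  exact_mod_cast this

lemma elen_span_singleton_le (x : M) (J : Ideal R)
    (hJ : J ≤ LinearMap.ker (LinearMap.toSpanSingleton R M x)) :
    elen R ↥(Submodule.span R {x}) ≤ elen R (R ⧸ J) := by
  set f := LinearMap.toSpanSingleton R M x
  have h1 : Submodule.span R {x} = LinearMap.range f :=
    LinearMap.span_singleton_eq_range R M x
  have e1 : ↥(Submodule.span R {x}) ≃ₗ[R] ↥(LinearMap.range f) := LinearEquiv.ofEq _ _ h1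
  have e2 : (R ⧸ LinearMap.ker f) ≃ₗ[R] ↥(LinearMap.range f) := f.quotKerEquivRange
  have h2 : elen R ↥(Submodule.span R {x}) = elen R (R ⧸ LinearMap.ker f) := by
    rw [elen_congr e1, elen_congr e2]
  rw [h2]
  refine elen_le_of_surjective (Submodule.mapQ J (LinearMap.ker f) LinearMap.id hJ) ?_
  intro z
  obtain ⟨r, rfl⟩ := Submodule.Quotient.mk_surjective _ z
  exact ⟨Submodule.Quotient.mk r, by simp [Submodule.mapQ_apply, ← Ideal.Quotient.mk_eq_mk]⟩

lemma mk_smul_mk_eq (c : Ideal R) (r s : R) :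
    r • (Ideal.Quotient.mk c s) = Ideal.Quotient.mk c (r * s) := by
  rw [← Ideal.Quotient.mk_eq_mk, ← Ideal.Quotient.mk_eq_mk, ← smul_eq_mul,
    Submodule.Quotient.mk_smul]

lemma elen_le_one_of_le_max [IsLocalRing R] (c : Ideal R) (hc : IsLocalRing.maximalIdeal R ≤ c) :
    elen R (R ⧸ c) ≤ 1 := by
  have hsub : ∀ S : Submodule R (R ⧸ c), S = ⊥ ∨ S = ⊤ := by
    intro S
    by_cases hS : S = ⊥
    · exact Or.inl hS
    · right
      obtain ⟨x, hxS, hx0⟩ := Submodule.exists_mem_ne_zero_of_ne_bot hS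
      obtain ⟨r, rfl⟩ := Ideal.Quotient.mk_surjective x
      have hr : r ∉ IsLocalRing.maximalIdeal R := by
        intro hr
        exact hx0 (Ideal.Quotient.eq_zero_iff_mem.mpr (hc hr))
      have hu : IsUnit r := by
        by_contra hu
        exact hr hu
      have h1 : (1 : R ⧸ c) ∈ S := by
        have : (↑hu.unit⁻¹ : R) • Ideal.Quotient.mk c r ∈ S := Submodule.smul_mem _ _ hxS
        have heq : (↑hu.unit⁻¹ : R) • Ideal.Quotient.mk c r = 1 := by
          rw [mk_smul_mk_eq, IsUnit.val_inv_mul, map_one]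
        rwa [heq] at this
      rw [Submodule.eq_top_iff']
      intro t
      obtain ⟨s, rfl⟩ := Ideal.Quotient.mk_surjective t
      have : s • (1 : R ⧸ c) ∈ S := Submodule.smul_mem _ _ h1
      have heq : s • (1 : R ⧸ c) = Ideal.Quotient.mk c s := by
        rw [show (1 : R ⧸ c) = Ideal.Quotient.mk c 1 from (map_one _).symm, mk_smul_mk_eq,
          mul_one]
      rwa [heq] at this
  refine iSup_le fun p => ?_
  by_contra hlen
  push_neg at hlen
  have h2 : 2 ≤ p.length := by
    by_contra h
    push_neg at h
    interval_cases h' : p.length <;> simp_all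
  have h01 : p.toFun ⟨0, by omega⟩ < p.toFun ⟨1, by omega⟩ := p.strictMono (by
    rw [Fin.mk_lt_mk]; omega)
  have h12 : p.toFun ⟨1, by omega⟩ < p.toFun ⟨2, by omega⟩ := p.strictMono (by
    rw [Fin.mk_lt_mk]; omega)
  rcases hsub (p.toFun ⟨1, by omega⟩) with h | h
  · exact (not_lt_bot (h ▸ h01)).elim
  · exact (not_top_lt (h ▸ h12)).elim

lemma exists_atom_of_elen_le {n : ℕ} (h : elen R M ≤ n) [Nontrivial M] :
    ∃ S : Submodule R M, IsAtom S := by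
  have hwf : WellFounded ((· < ·) : Submodule R M → Submodule R M → Prop) := by
    rw [RelEmbedding.wellFounded_iff_isEmpty]
    constructor
    intro f
    have hstep : ∀ i : Fin (n + 1), f (n + 1 - (i : ℕ)) < f (n + 1 - ((i : ℕ) + 1)) := by
      intro i
      refine f.map_rel_iff.mpr ?_
      have := i.isLt
      omega
    let p : LTSeries (Submodule R M) := ⟨n + 1, fun i => f (n + 1 - (i : ℕ)), fun i => by
      simpa using hstep i⟩
    have := length_le_elen p
    have hcontr : ((n + 1 : ℕ) : ℕ∞) ≤ (n : ℕ∞) := le_trans this h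
    exact absurd (Nat.cast_le.mp hcontr) (by omega)
  haveI : IsAtomic (Submodule R M) := isAtomic_of_orderBot_wellFounded_lt hwf
  rcases eq_bot_or_exists_atom_le (⊤ : Submodule R M) with h | ⟨a, ha, _⟩
  · exfalso
    obtain ⟨x, hx⟩ := exists_ne (0 : M)
    have : x ∈ (⊥ : Submodule R M) := h ▸ Submodule.mem_top
    exact hx (by simpa using this)
  · exact ⟨a, ha⟩

lemma elen_le_of_span_list [IsLocalRing R] :
    ∀ (n : ℕ) (M : Type*) [AddCommGroup M] [Module R M] (l : List M), l.length = n →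
      Submodule.span R {x | x ∈ l} = ⊤ →
      (∀ z ∈ IsLocalRing.maximalIdeal R, ∀ x : M, z • x = 0) →
      elen R M ≤ (n : ℕ∞) := by
  intro n
  induction n with
  | zero =>
    intro M _ _ l hl hspan _
    rw [List.length_eq_zero_iff] at hl
    subst hl
    have : Submodule.span R (∅ : Set M) = ⊤ := by simpa using hspan
    rw [Submodule.span_empty] at this
    haveI : Subsingleton M := by
      constructor
      intro a b
      have ha : a ∈ (⊥ : Submodule R M) := this ▸ Submodule.mem_top
      have hb : b ∈ (⊥ : Submodule R M) := this ▸ Submodule.mem_top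
      simp only [Submodule.mem_bot] at ha hb
      rw [ha, hb]
    simp [elen_eq_zero_of_subsingleton]
  | succ n ih =>
    intro M _ _ l hl hspan hkill
    match l with
    | y :: t =>
      simp only [List.length_cons, Nat.succ.injEq] at hl
      set N := Submodule.span R {y} with hN
      have h1 : elen R M ≤ elen R ↥N + elen R (M ⧸ N) := elen_le_subadd N
      have h2 : elen R ↥N ≤ 1 := by
        refine le_trans (elen_span_singleton_le y (IsLocalRing.maximalIdeal R) ?_) ?_
        · intro z hz
          rw [LinearMap.mem_ker, LinearMap.toSpanSingleton_apply]
          exact hkill z hz y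
        · exact elen_le_one_of_le_max _ le_rfl
      have h3 : elen R (M ⧸ N) ≤ (n : ℕ∞) := by
        refine ih (M ⧸ N) (t.map N.mkQ) (by simp [hl]) ?_ ?_
        · have himg : {x | x ∈ t.map N.mkQ} = N.mkQ '' {x | x ∈ t} := by
            ext z; simp
          rw [himg, ← Submodule.map_span]
          have hins : Submodule.span R {x | x ∈ y :: t} = N ⊔ Submodule.span R {x | x ∈ t} := by
            have : {x | x ∈ y :: t} = insert y {x | x ∈ t} := by ext z; simp
            rw [this, Submodule.span_insert, hN]
          have hmapN : Submodule.map N.mkQ N = ⊥ := by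
            rw [eq_bot_iff, Submodule.map_le_iff_le_comap, Submodule.comap_bot,
              Submodule.ker_mkQ]
          have := congrArg (Submodule.map N.mkQ) hspan
          rw [hins, Submodule.map_sup, hmapN, bot_sup_eq] at this
          rw [this, Submodule.map_top, Submodule.range_mkQ]
        · intro z hz x
          obtain ⟨w, rfl⟩ := Submodule.Quotient.mk_surjective N x
          rw [← Submodule.Quotient.mk_smul, hkill z hz w, Submodule.Quotient.mk_zero]
      calc elen R M ≤ elen R ↥N + elen R (M ⧸ N) := h1
        _ ≤ 1 + (n : ℕ∞) := add_le_add h2 h3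
        _ = ((n + 1 : ℕ) : ℕ∞) := by push_cast; ring

lemma elen_quot_le_quot {A B : Ideal R} (h : A ≤ B) : elen R (R ⧸ B) ≤ elen R (R ⧸ A) := by
  refine elen_le_of_surjective (Submodule.mapQ A B LinearMap.id h) ?_
  intro z
  obtain ⟨r, rfl⟩ := Submodule.Quotient.mk_surjective _ z
  exact ⟨Submodule.Quotient.mk r, by simp [Submodule.mapQ_apply, ← Ideal.Quotient.mk_eq_mk]⟩

lemma elen_quot_split (A B : Ideal R) (h : A ≤ B) :
    elen R (R ⧸ A) ≤
      elen R ↥(Submodule.map (Submodule.mkQ A) B) + elen R (R ⧸ B) := by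
  refine le_trans (elen_le_subadd (Submodule.map (Submodule.mkQ A) B)) ?_
  have e := Submodule.quotientQuotientEquivQuotient (A : Submodule R R) B h
  rw [elen_congr e]

lemma elen_eq_zero_of_top : elen R (R ⧸ (⊤ : Ideal R)) = 0 := by
  haveI : Subsingleton (R ⧸ (⊤ : Ideal R)) :=
    Submodule.Quotient.subsingleton_iff.mpr rfl
  exact elen_eq_zero_of_subsingleton

lemma elen_fg_killed_ne_top [IsLocalRing R] {M : Type*} [AddCommGroup M] [Module R M]
    (hfg : (⊤ : Submodule R M).FG)
    (hkill : ∀ z ∈ IsLocalRing.maximalIdeal R, ∀ x : M, z • x = 0) :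
    elen R M ≠ ⊤ := by
  obtain ⟨s, hs⟩ := hfg
  have := elen_le_of_span_list s.toList.length M s.toList rfl ?_ hkill
  · exact ne_top_of_le_ne_top (by simp) this
  · have : {x | x ∈ s.toList} = (↑s : Set M) := by ext z; simp
    rw [this, hs]

lemma elen_pow_ne_top [IsNoetherianRing R] [IsLocalRing R] (k : ℕ) :
    elen R (R ⧸ (IsLocalRing.maximalIdeal R ^ k)) ≠ ⊤ := by
  induction k with
  | zero =>
    rw [pow_zero, Ideal.one_eq_top, elen_eq_zero_of_top]
    simp
  | succ k ih =>
    set m := IsLocalRing.maximalIdeal R with hm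
    set N := Submodule.map (Submodule.mkQ (m ^ (k + 1) : Ideal R)) (m ^ k : Ideal R) with hNdef
    have hsplit := elen_quot_split (m ^ (k + 1)) (m ^ k)
      (Ideal.pow_le_pow_right (by omega))
    have hN : elen R ↥N ≠ ⊤ := by
      refine elen_fg_killed_ne_top ?_ ?_
      · rw [Submodule.fg_top]
        exact IsNoetherian.noetherian N
      · intro z hz x
        refine Subtype.ext ?_
        have hx : (x : R ⧸ (m ^ (k + 1) : Ideal R)) ∈ N := x.2
        obtain ⟨w, hw, hwx⟩ := Submodule.mem_map.mp hx
        have : z • (x : R ⧸ (m ^ (k + 1) : Ideal R)) = 0 := by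
          rw [← hwx]
          show z • Submodule.Quotient.mk w = 0
          rw [← Submodule.Quotient.mk_smul, Submodule.Quotient.mk_eq_zero]
          have : z • w = z * w := rfl
          rw [this, pow_succ']
          exact Ideal.mul_mem_mul hz hw
        simpa using this
    have h1 : elen R ↥N < ⊤ := lt_top_iff_ne_top.mpr hN
    have h2 : elen R (R ⧸ (m ^ k : Ideal R)) < ⊤ := lt_top_iff_ne_top.mpr ih
    exact ne_top_of_le_ne_top (WithTop.add_lt_top.mpr ⟨h1, h2⟩).ne hsplit

lemma elen_ne_top_of_le_radical [IsNoetherianRing R] [IsLocalRing R] {A : Ideal R}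
    (h : IsLocalRing.maximalIdeal R ≤ A.radical) : elen R (R ⧸ A) ≠ ⊤ := by
  obtain ⟨k, hk⟩ := Ideal.exists_pow_le_of_le_radical_of_fg h (IsNoetherian.noetherian _)
  exact ne_top_of_le_ne_top (elen_pow_ne_top k) (elen_quot_le_quot hk)

lemma fpow_mono {A B : Ideal R} (h : A ≤ B) (q : ℕ) : fpow A q ≤ fpow B q :=
  Ideal.span_mono (Set.image_mono h)

lemma pow_mem_fpow {A : Ideal R} {x : R} (hx : x ∈ A) (q : ℕ) : x ^ q ∈ fpow A q :=
  Ideal.subset_span ⟨x, hx, rfl⟩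

lemma fpow_top (q : ℕ) : fpow (⊤ : Ideal R) q = ⊤ := by
  rw [eq_top_iff]
  intro x _
  have : (1 : R) ∈ fpow (⊤ : Ideal R) q := by
    have := pow_mem_fpow (A := (⊤ : Ideal R)) (x := (1 : R)) Submodule.mem_top q
    simpa using this
  simpa using Ideal.mul_mem_left _ x this

lemma fpow_sup_span (p : ℕ) (hp : p.Prime) [CharP R p] (A : Ideal R) (y : R) (e : ℕ) :
    fpow (A ⊔ Ideal.span {y}) (p ^ e) = fpow A (p ^ e) ⊔ Ideal.span {y ^ p ^ e} := by
  haveI := Fact.mk hp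
  refine le_antisymm ?_ ?_
  · rw [fpow, Ideal.span_le]
    rintro _ ⟨x, hx, rfl⟩
    rcases Submodule.mem_sup.mp hx with ⟨a, ha, t, ht, rfl⟩
    obtain ⟨r, rfl⟩ := Ideal.mem_span_singleton'.mp ht
    show (a + r * y) ^ p ^ e ∈ _
    rw [add_pow_char_pow, mul_pow]
    exact Submodule.add_mem _ (Submodule.mem_sup_left (pow_mem_fpow ha _))
      (Submodule.mem_sup_right (Ideal.mul_mem_left _ _ (Ideal.mem_span_singleton_self _)))
  · refine sup_le (fpow_mono le_sup_left _) ?_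
    rw [Ideal.span_le, Set.singleton_subset_iff]
    exact pow_mem_fpow (Submodule.mem_sup_right (Ideal.mem_span_singleton_self _)) _

lemma main_ineq [IsNoetherianRing R] [IsLocalRing R] (p : ℕ) (hp : p.Prime) [CharP R p]
    (e : ℕ) :
    ∀ (n : ℕ) (A : Ideal R), IsLocalRing.maximalIdeal R ≤ A.radical →
      elen R (R ⧸ A) ≤ (n : ℕ∞) →
      elen R (R ⧸ fpow A (p ^ e)) ≤
        (n : ℕ∞) * elen R (R ⧸ fpow (IsLocalRing.maximalIdeal R) (p ^ e)) := by
  intro n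
  induction n with
  | zero =>
    intro A _ hlen
    have hA : A = ⊤ := by
      by_contra hA
      haveI : Nontrivial (R ⧸ A) := Ideal.Quotient.nontrivial_iff.mpr hA
      have := one_le_elen_of_nontrivial (R := R) (M := R ⧸ A)
      have : (1 : ℕ∞) ≤ 0 := this.trans (by exact_mod_cast hlen)
      simp at this
    subst hA
    rw [fpow_top, elen_eq_zero_of_top]
    simp
  | succ n ih =>
    intro A hrad hlen
    by_cases hA : A = ⊤
    · subst hA
      rw [fpow_top, elen_eq_zero_of_top]
      simp
    haveI : Nontrivial (R ⧸ A) := Ideal.Quotient.nontrivial_iff.mpr hA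
    obtain ⟨S, hS⟩ := exists_atom_of_elen_le hlen
    obtain ⟨s, hsS, hs0⟩ := Submodule.exists_mem_ne_zero_of_ne_bot hS.1
    have hspan : Submodule.span R ({s} : Set (R ⧸ A)) = S := by
      rcases (hS.le_iff.mp (Submodule.span_le.mpr
        (Set.singleton_subset_iff.mpr hsS))) with h | h
      · exact absurd (Submodule.span_eq_bot.mp h s rfl) hs0
      · exact h
    -- the maximal ideal kills s
    have hkills : ∀ z ∈ IsLocalRing.maximalIdeal R, z • s = 0 := by
      intro z hz
      by_contra hzs
      have hsub : Submodule.span R ({z • s} : Set (R ⧸ A)) = S := by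
        rcases (hS.le_iff.mp (Submodule.span_le.mpr
          (Set.singleton_subset_iff.mpr (Submodule.smul_mem S z hsS)))) with h | h
        · exact absurd (Submodule.span_eq_bot.mp h _ rfl) hzs
        · exact h
      have hs_mem : s ∈ Submodule.span R {z • s} := hsub.symm ▸ hsS
      obtain ⟨r, hr⟩ := Submodule.mem_span_singleton.mp hs_mem
      have h0 : (1 - r * z) • s = 0 := by
        rw [sub_smul, one_smul, mul_smul]
        rw [hr]
        simp
      have hu : IsUnit (1 - r * z) := by
        have : r * z ∈ IsLocalRing.maximalIdeal R := Ideal.mul_mem_left _ _ hz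
        exact IsLocalRing.isUnit_one_sub_self_of_mem_nonunits _ this
      have : s = 0 := by
        have h1 := congrArg (fun t => (↑hu.unit⁻¹ : R) • t) h0
        simpa [smul_smul, IsUnit.val_inv_mul] using h1
      exact hs0 this
    obtain ⟨y, hy⟩ := Ideal.Quotient.mk_surjective s
    set B := A ⊔ Ideal.span {y} with hB
    have hzy : ∀ z ∈ IsLocalRing.maximalIdeal R, z * y ∈ A := by
      intro z hz
      have : z • s = 0 := hkills z hz
      rw [← hy, mk_smul_mk_eq] at this
      exact Ideal.Quotient.eq_zero_iff_mem.mp this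
    -- S is the image of B
    have hSB : Submodule.map (Submodule.mkQ (A : Submodule R R)) (B : Submodule R R) = S := by
      rw [hB, Submodule.map_sup]
      have h1 : Submodule.map (Submodule.mkQ (A : Submodule R R)) (A : Submodule R R) = ⊥ := by
        rw [eq_bot_iff, Submodule.map_le_iff_le_comap, Submodule.comap_bot, Submodule.ker_mkQ]
      have h2 : Submodule.map (Submodule.mkQ (A : Submodule R R))
          (Ideal.span {y} : Submodule R R) = Submodule.span R {s} := by
        rw [Ideal.span, Submodule.map_span, Set.image_singleton]
        congr 1
        rw [← hy]
        rfl
      rw [h1, h2, bot_sup_eq, hspan]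
    -- elen (R ⧸ B) ≤ n
    have hBlen : elen R (R ⧸ B) ≤ (n : ℕ∞) := by
      have e1 := Submodule.quotientQuotientEquivQuotient (A : Submodule R R)
        (B : Submodule R R) le_sup_left
      rw [hSB] at e1
      rw [← elen_congr e1]
      refine iSup_le fun q => ?_
      have := length_add_one_le_elen S hS.1 q
      have h2 : (q.length : ℕ∞) + 1 ≤ (n : ℕ∞) + 1 := by
        refine this.trans ?_
        exact_mod_cast hlen
      have h3 : ((q.length + 1 : ℕ) : ℕ∞) ≤ ((n + 1 : ℕ) : ℕ∞) := by push_cast; exact h2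
      have h4 : q.length ≤ n := by
        have := Nat.cast_le.mp h3
        omega
      exact_mod_cast h4
    have hradB : IsLocalRing.maximalIdeal R ≤ B.radical :=
      le_trans hrad (Ideal.radical_mono le_sup_left)
    have hIH := ih B hradB hBlen
    -- now split off the Frobenius power
    set q := p ^ e with hq
    have hfB : fpow B q = fpow A q ⊔ Ideal.span {y ^ q} := fpow_sup_span p hp A y e
    have hle : fpow A q ≤ fpow B q := fpow_mono le_sup_left _
    have hsplit := elen_quot_split (fpow A q) (fpow B q) hle
    -- bound the middle term
    have hmid : elen R ↥(Submodule.map (Submodule.mkQ (fpow A q : Submodule R R))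
        (fpow B q : Submodule R R)) ≤
        elen R (R ⧸ fpow (IsLocalRing.maximalIdeal R) q) := by
      set x : R ⧸ fpow A q := Submodule.Quotient.mk (y ^ q) with hx
      have himg : Submodule.map (Submodule.mkQ (fpow A q : Submodule R R))
          (fpow B q : Submodule R R) = Submodule.span R {x} := by
        rw [hfB, Submodule.map_sup]
        have h1 : Submodule.map (Submodule.mkQ (fpow A q : Submodule R R))
            (fpow A q : Submodule R R) = ⊥ := by
          rw [eq_bot_iff, Submodule.map_le_iff_le_comap, Submodule.comap_bot, Submodule.ker_mkQ]
        have h2 : Submodule.map (Submodule.mkQ (fpow A q : Submodule R R))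
            (Ideal.span {y ^ q} : Submodule R R) = Submodule.span R {x} := by
          rw [Ideal.span, Submodule.map_span, Set.image_singleton]
          rfl
        rw [h1, h2, bot_sup_eq]
      rw [himg]
      refine elen_span_singleton_le x (fpow (IsLocalRing.maximalIdeal R) q) ?_
      rw [fpow, Ideal.span_le]
      rintro _ ⟨z, hz, rfl⟩
      rw [SetLike.mem_coe, LinearMap.mem_ker, LinearMap.toSpanSingleton_apply, hx,
        ← Submodule.Quotient.mk_smul, Submodule.Quotient.mk_eq_zero]
      have : z ^ q • y ^ q = (z * y) ^ q := by
        rw [smul_eq_mul, mul_pow]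
      rw [this]
      exact pow_mem_fpow (hzy z hz) q
    calc elen R (R ⧸ fpow A q)
        ≤ elen R ↥(Submodule.map (Submodule.mkQ (fpow A q : Submodule R R))
            (fpow B q : Submodule R R)) + elen R (R ⧸ fpow B q) := hsplit
      _ ≤ elen R (R ⧸ fpow (IsLocalRing.maximalIdeal R) q) +
            (n : ℕ∞) * elen R (R ⧸ fpow (IsLocalRing.maximalIdeal R) q) :=
          add_le_add hmid hIH
      _ = ((n + 1 : ℕ) : ℕ∞) * elen R (R ⧸ fpow (IsLocalRing.maximalIdeal R) q) := by
          push_cast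
          ring


end AuxLen
/-- The Watanabe–Yoshida inequality `e_HK(I) ≤ length(R/I) · e_HK(m)`. -/
theorem stmt13 {R : Type*} [CommRing R] [IsNoetherianRing R] [IsLocalRing R]
    (p : ℕ) (hp : p.Prime) [CharP R p]
    (d : ℕ) (hd : ringKrullDim R = d)
    (I : Ideal R) (hI : I.radical = maximalIdeal R)
    (eI em : ℝ)
    (hIk : Filter.Tendsto (fun e : ℕ => (qlen (fpow I (p ^ e)) : ℝ) / (p : ℝ) ^ (d * e))
      Filter.atTop (nhds eI))
    (hmk : Filter.Tendsto
      (fun e : ℕ => (qlen (fpow (maximalIdeal R) (p ^ e)) : ℝ) / (p : ℝ) ^ (d * e))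
      Filter.atTop (nhds em)) :
    eI ≤ (qlen I : ℝ) * em := by
  
  set m := IsLocalRing.maximalIdeal R with hm
  have hfin_I : elen R (R ⧸ I) ≠ ⊤ := elen_ne_top_of_le_radical (le_of_eq hI.symm)
  have hlenI : elen R (R ⧸ I) ≤ ((qlen I : ℕ) : ℕ∞) := by
    rw [qlen_eq_toNat_elen, ENat.coe_toNat hfin_I]
  have key : ∀ e : ℕ, (qlen (fpow I (p ^ e)) : ℝ) ≤
      (qlen I : ℝ) * (qlen (fpow m (p ^ e)) : ℝ) := by
    intro e
    have hMe : m ≤ (fpow m (p ^ e)).radical := by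
      intro z hz
      exact Ideal.mem_radical_iff.mpr ⟨p ^ e, pow_mem_fpow hz _⟩
    have hfin_m : elen R (R ⧸ fpow m (p ^ e)) ≠ ⊤ := elen_ne_top_of_le_radical hMe
    have hmain := main_ineq p hp e (qlen I) I (le_of_eq hI.symm) hlenI
    have hb : ((qlen I : ℕ∞) * elen R (R ⧸ fpow m (p ^ e))) =
        ((qlen I * qlen (fpow m (p ^ e)) : ℕ) : ℕ∞) := by
      rw [qlen_eq_toNat_elen (fpow m (p ^ e))]
      rw [← ENat.coe_toNat hfin_m]
      push_cast
      rfl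
    rw [hb] at hmain
    have hnat : qlen (fpow I (p ^ e)) ≤ qlen I * qlen (fpow m (p ^ e)) := by
      rw [qlen_eq_toNat_elen]
      have := ENat.toNat_le_toNat hmain (ENat.coe_ne_top _)
      simpa using this
    exact_mod_cast hnat
  have hpos : ∀ e : ℕ, (0 : ℝ) < (p : ℝ) ^ (d * e) :=
    fun e => pow_pos (by exact_mod_cast hp.pos) _
  refine le_of_tendsto_of_tendsto' hIk (hmk.const_mul ((qlen I : ℝ))) ?_
  intro e
  rw [← mul_div_assoc]
  exact (div_le_div_iff_of_pos_right (hpos e)).mpr (key e)
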